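/- Let G be a simple graph on a finite vertex type V such that G is a tree (connected and acyclic), and define the energy of f : V → ℝ by E_G(f) = (1/2) * ∑_{x ∈ V} ∑_{y ∈ V} w(x,y) * (f x - f y)^2, where w(x,y) = 1 if x and y are adjacent in G and 0 otherwise. Fix x, y ∈ V with x ≠ y and let d = G.dist x y. Then there exists f : V → ℝ with f x = 1, f y = 0 and E_G(f) = 1/(d : ℝ), and moreover every g : V → ℝ with g x = 1 and g y = 0 satisfies 1/(d : ℝ) ≤ E_G(g). In particular the effective resistance R(x,y) = (inf{E_G(g) : g x = 1, g y = 0})^{-1} equals the graph distance d(x,y). -/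

import Mathlib

open Finset SimpleGraph

private lemma tree_aux_getVert_inj {V : Type*} {G : SimpleGraph V} {a b : V}
    (p : G.Walk a b) (hp : p.IsPath) :
    ∀ i ≤ p.length, ∀ j ≤ p.length, p.getVert i = p.getVert j → i = j := by
  induction p with
  | nil => intro i hi j hj _; simp at hi hj; omega
  | cons h q ih =>
    rw [SimpleGraph.Walk.cons_isPath_iff] at hp
    intro i hi j hj hij
    match i, j with
    | 0, 0 => rfl
    | 0, k + 1 =>
      exfalso
      apply hp.2
      rw [SimpleGraph.Walk.mem_support_iff_exists_getVert]
      refine ⟨k, ?_, by simpa using hj⟩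
      simpa [SimpleGraph.Walk.getVert_cons_succ] using hij.symm
    | k + 1, 0 =>
      exfalso
      apply hp.2
      rw [SimpleGraph.Walk.mem_support_iff_exists_getVert]
      refine ⟨k, ?_, by simpa using hi⟩
      simpa [SimpleGraph.Walk.getVert_cons_succ] using hij
    | k + 1, l + 1 =>
      have := ih hp.1 k (by simpa using hi) l (by simpa using hj)
        (by simpa [SimpleGraph.Walk.getVert_cons_succ] using hij)
      omega

private lemma tree_aux_side_or {V : Type*} {G : SimpleGraph V} {a b w : V} (hab : G.Adj a b)
    (hw : G.Reachable w a) :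
    (G.deleteEdges {s(a, b)}).Reachable w a ∨ (G.deleteEdges {s(a, b)}).Reachable w b := by
  have aux : ∀ (c t : V) (q : G.Walk c t), t = a →
      (G.deleteEdges {s(a, b)}).Reachable c a ∨ (G.deleteEdges {s(a, b)}).Reachable c b := by
    intro c t q
    induction q with
    | nil => rintro rfl; exact Or.inl (Reachable.refl _)
    | @cons u v t2 h q ih =>
      rintro rfl
      by_cases he : s(u, v) = s(t2, b)
      · rw [Sym2.eq_iff] at he
        rcases he with ⟨rfl, rfl⟩ | ⟨rfl, rfl⟩
        · exact Or.inl (Reachable.refl _)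
        · exact Or.inr (Reachable.refl _)
      · have hadj : (G.deleteEdges {s(t2, b)}).Adj u v := by
          rw [SimpleGraph.deleteEdges_adj]
          exact ⟨h, by simpa using he⟩
        rcases ih rfl with h1 | h1
        · exact Or.inl (hadj.reachable.trans h1)
        · exact Or.inr (hadj.reachable.trans h1)
  obtain ⟨q⟩ := hw
  exact aux w a q rfl

private lemma tree_aux_bridge {V : Type*} {G : SimpleGraph V} (htree : G.IsTree)
    {a b : V} (hab : G.Adj a b) : ¬ (G.deleteEdges {s(a, b)}).Reachable a b := by
  have h := (SimpleGraph.isAcyclic_iff_forall_adj_isBridge.mp htree.IsAcyclic) hab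
  rw [SimpleGraph.isBridge_iff] at h
  exact h

private lemma tree_aux_not_reach {V : Type*} {G : SimpleGraph V} (htree : G.IsTree)
    {a b : V} (q : G.Walk a b) (hq : q.IsPath) {e : Sym2 V} (he : e ∈ q.edges) :
    ¬ (G.deleteEdges {e}).Reachable a b := by
  induction q with
  | nil => simp at he
  | @cons u v t' h q ih =>
    rw [SimpleGraph.Walk.cons_isPath_iff] at hq
    rw [SimpleGraph.Walk.edges_cons, List.mem_cons] at he
    rcases he with rfl | he
    · intro hr
      have hq'e : s(u, v) ∉ q.edges := fun hmem =>
        hq.2 (q.fst_mem_support_of_mem_edges hmem)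
      have h2 : (G.deleteEdges {s(u, v)}).Reachable v t' :=
        ⟨q.toDeleteEdges {s(u, v)} (fun e' he' => by
          simp only [Set.mem_singleton_iff]
          rintro rfl
          exact hq'e he')⟩
      exact tree_aux_bridge htree h (hr.trans h2.symm)
    · intro hr
      have hne : s(u, v) ≠ e := by
        intro h'
        exact hq.2 (q.fst_mem_support_of_mem_edges (h' ▸ he))
      have hadj : (G.deleteEdges {e}).Adj u v := by
        rw [SimpleGraph.deleteEdges_adj]
        exact ⟨h, by simpa using hne⟩
      exact ih hq.1 he (hadj.reachable.symm.trans hr)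


/-- Section 3: on a tree with natural weights, the effective resistance between
`x` and `y` equals the graph distance: the energy infimum over potentials with
`f x = 1`, `f y = 0` is attained with value `1/d(x,y)`. -/
theorem tree_effective_resistance_eq_dist
    {V : Type*} [Fintype V] (G : SimpleGraph V) [DecidableRel G.Adj]
    (htree : G.IsTree)
    (E : (V → ℝ) → ℝ)
    (hE : ∀ f, E f = (1 / 2) * ∑ x, ∑ y,
      (if G.Adj x y then (1 : ℝ) else 0) * (f x - f y) ^ 2)
    (x y : V) (hxy : x ≠ y) (d : ℕ) (hd : d = G.dist x y) :
    (∃ f : V → ℝ, f x = 1 ∧ f y = 0 ∧ E f = 1 / (d : ℝ)) ∧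
      ∀ g : V → ℝ, g x = 1 → g y = 0 → 1 / (d : ℝ) ≤ E g := by
  classical
  obtain ⟨p, hpath, hplen⟩ := htree.isConnected.exists_path_of_dist x y
  rw [← hd] at hplen
  have hd0 : d ≠ 0 := by
    have := htree.isConnected.pos_dist_of_ne hxy
    omega
  have hdR : (d : ℝ) ≠ 0 := Nat.cast_ne_zero.mpr hd0
  -- getVert injectivity
  have hinj := tree_aux_getVert_inj p hpath
  constructor
  · -- existence of the optimal potential
    set S : Finset (Sym2 V) := p.edges.toFinset with hS
    have hnodup : p.edges.Nodup := Walk.edges_nodup_of_support_nodup hpath.support_nodup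
    have hScard : S.card = d := by
      rw [hS, List.toFinset_card_of_nodup hnodup, Walk.length_edges, hplen]
    set χ : Sym2 V → V → ℝ := fun e v =>
      if (G.deleteEdges {e}).Reachable x v then 1 else 0 with hχ
    set f : V → ℝ := fun v => (∑ e ∈ S, χ e v) / d with hf
    have hfx : f x = 1 := by
      have : ∀ e ∈ S, χ e x = 1 := fun e _ => if_pos (Reachable.refl x)
      rw [hf]
      simp only
      rw [Finset.sum_congr rfl this, Finset.sum_const, hScard]
      field_simp
      simp
    have hfy : f y = 0 := by
      have : ∀ e ∈ S, χ e y = 0 := by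
        intro e he
        exact if_neg (tree_aux_not_reach htree p hpath (List.mem_toFinset.mp he))
      rw [hf]
      simp only
      rw [Finset.sum_congr rfl this, Finset.sum_const]
      simp
    refine ⟨f, hfx, hfy, ?_⟩
    -- the squared difference across an edge
    have hdiff : ∀ u v : V, G.Adj u v →
        (f u - f v) ^ 2 = if s(u, v) ∈ S then 1 / (d : ℝ) ^ 2 else 0 := by
      intro u v huv
      have hsum : (∑ e ∈ S, χ e u) - (∑ e ∈ S, χ e v)
          = if s(u, v) ∈ S then χ s(u, v) u - χ s(u, v) v else 0 := by
        rw [← Finset.sum_sub_distrib]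
        rw [show (∑ e ∈ S, (χ e u - χ e v))
            = ∑ e ∈ S, (if e = s(u, v) then χ e u - χ e v else 0) from
          Finset.sum_congr rfl ?_]
        · rw [Finset.sum_ite_eq' S (s(u, v)) (fun e => χ e u - χ e v)]
        · intro e _
          by_cases hev : e = s(u, v)
          · rw [if_pos hev]
          · rw [if_neg hev]
            have hadj : (G.deleteEdges {e}).Adj u v := by
              rw [SimpleGraph.deleteEdges_adj]
              exact ⟨huv, by simpa using fun h => hev h.symm⟩
            have : (G.deleteEdges {e}).Reachable x u ↔ (G.deleteEdges {e}).Reachable x v :=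
              ⟨fun h => h.trans hadj.reachable, fun h => h.trans hadj.reachable.symm⟩
            simp only [hχ]
            rw [if_congr this rfl rfl, sub_self]
      by_cases hmem : s(u, v) ∈ S
      · rw [if_pos hmem]
        have hone : (χ s(u, v) u - χ s(u, v) v) ^ 2 = 1 := by
          have hor := tree_aux_side_or huv (htree.isConnected x u)
          have hnotboth : ¬ ((G.deleteEdges {s(u, v)}).Reachable x u ∧
              (G.deleteEdges {s(u, v)}).Reachable x v) := by
            rintro ⟨h1, h2⟩
            exact tree_aux_bridge htree huv (h1.symm.trans h2)
          rcases hor with h1 | h1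
          · have h2 : ¬ (G.deleteEdges {s(u, v)}).Reachable x v := fun h => hnotboth ⟨h1, h⟩
            rw [hχ]; simp [h1, h2]
          · have h2 : ¬ (G.deleteEdges {s(u, v)}).Reachable x u := fun h =>
              hnotboth ⟨h, h1⟩
            rw [hχ]; simp [h1, h2]
        rw [hf]
        simp only
        rw [div_sub_div_same, hsum, if_pos hmem, div_pow, hone]
      · rw [if_neg hmem, hf]
        simp only
        rw [div_sub_div_same, hsum, if_neg hmem]
        simp
    -- termwise rewrite of the energy
    have hterm : ∀ u v : V, (if G.Adj u v then (1 : ℝ) else 0) * (f u - f v) ^ 2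
        = if s(u, v) ∈ S then 1 / (d : ℝ) ^ 2 else 0 := by
      intro u v
      by_cases huv : G.Adj u v
      · rw [if_pos huv, one_mul, hdiff u v huv]
      · rw [if_neg huv, zero_mul]
        have : s(u, v) ∉ S := by
          intro hmem
          exact huv (p.edges_subset_edgeSet (List.mem_toFinset.mp hmem))
        rw [if_neg this]
    -- counting: the number of ordered pairs whose edge lies on the path is 2d
    have hcount : ((Finset.univ ×ˢ Finset.univ : Finset (V × V)).filter
        (fun z => s(z.1, z.2) ∈ S)).card = 2 * d := by
      rw [Finset.card_eq_sum_card_fiberwise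
        (f := fun z : V × V => s(z.1, z.2)) (t := S)
        (s := (Finset.univ ×ˢ Finset.univ : Finset (V × V)).filter (fun z => s(z.1, z.2) ∈ S))
        (fun z hz => (Finset.mem_filter.mp hz).2)]
      have hfiber : ∀ e ∈ S, (((Finset.univ ×ˢ Finset.univ : Finset (V × V)).filter
          (fun z => s(z.1, z.2) ∈ S)).filter (fun z => s(z.1, z.2) = e)).card = 2 := by
        intro e he
        induction e with
        | h a b =>
          have hab : G.Adj a b := p.edges_subset_edgeSet (List.mem_toFinset.mp he)
          have : (((Finset.univ ×ˢ Finset.univ : Finset (V × V)).filter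
              (fun z => s(z.1, z.2) ∈ S)).filter (fun z => s(z.1, z.2) = s(a, b)))
              = {(a, b), (b, a)} := by
            ext ⟨z1, z2⟩
            simp only [Finset.mem_filter, Finset.mem_product, Finset.mem_univ, true_and,
              Finset.mem_insert, Finset.mem_singleton, Sym2.eq_iff, Prod.ext_iff]
            constructor
            · rintro ⟨_, ⟨rfl, rfl⟩ | ⟨rfl, rfl⟩⟩
              · left; exact ⟨rfl, rfl⟩
              · right; exact ⟨rfl, rfl⟩
            · rintro (⟨rfl, rfl⟩ | ⟨rfl, rfl⟩)
              · exact ⟨he, Or.inl ⟨rfl, rfl⟩⟩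
              · refine ⟨?_, Or.inr ⟨rfl, rfl⟩⟩
                rwa [Sym2.eq_swap]
          rw [this, Finset.card_insert_of_notMem, Finset.card_singleton]
          simp only [Finset.mem_singleton, Prod.ext_iff, not_and]
          intro h1 h2
          exact hab.ne h1
      rw [Finset.sum_congr rfl hfiber, Finset.sum_const, hScard]
      simp [mul_comm]
    -- put the energy computation together
    rw [hE]
    have : (∑ u, ∑ v, (if G.Adj u v then (1 : ℝ) else 0) * (f u - f v) ^ 2)
        = ∑ z ∈ (Finset.univ ×ˢ Finset.univ : Finset (V × V)),
            (if s(z.1, z.2) ∈ S then 1 / (d : ℝ) ^ 2 else 0) := by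
      rw [← Finset.sum_product']
      exact Finset.sum_congr rfl (fun z _ => hterm z.1 z.2)
    rw [this, ← Finset.sum_filter, Finset.sum_const, hcount]
    field_simp
    rw [nsmul_eq_mul, Nat.cast_mul, Nat.cast_ofNat, one_div, ← mul_assoc, ← mul_assoc]
    rw [mul_comm (d : ℝ) 2, mul_assoc 2, ← sq, mul_assoc, mul_inv_cancel₀ (pow_ne_zero 2 hdR), mul_one]
  · -- the lower bound
    intro g hgx hgy
    set a : ℕ → ℝ := fun i => g (p.getVert i) - g (p.getVert (i + 1)) with ha
    have htel : ∑ i ∈ Finset.range d, a i = 1 := by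
      rw [ha]
      simp only
      rw [Finset.sum_range_sub' (fun i => g (p.getVert i))]
      rw [Walk.getVert_zero, ← hplen, Walk.getVert_length, hgx, hgy, sub_zero]
    have hCS : 1 ≤ (d : ℝ) * ∑ i ∈ Finset.range d, (a i) ^ 2 := by
      have := sq_sum_le_card_mul_sum_sq (s := Finset.range d) (f := a)
      rw [htel, one_pow, Finset.card_range] at this
      exact_mod_cast this
    have hS : 1 / (d : ℝ) ≤ ∑ i ∈ Finset.range d, (a i) ^ 2 := by
      rw [div_le_iff₀ (by positivity : (0 : ℝ) < (d : ℝ))]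
      · linarith [hCS]
    -- the energy dominates the sum over the path darts (both orientations)
    set T1 : Finset (V × V) := (Finset.range d).image
      (fun i => (p.getVert i, p.getVert (i + 1))) with hT1
    set T2 : Finset (V × V) := (Finset.range d).image
      (fun i => (p.getVert (i + 1), p.getVert i)) with hT2
    have hinj1 : ∀ i ∈ Finset.range d, ∀ j ∈ Finset.range d,
        (p.getVert i, p.getVert (i + 1)) = (p.getVert j, p.getVert (j + 1)) → i = j := by
      intro i hi j hj hij
      rw [Finset.mem_range] at hi hj
      exact hinj i (by omega) j (by omega) (congrArg Prod.fst hij)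
    have hinj2 : ∀ i ∈ Finset.range d, ∀ j ∈ Finset.range d,
        (p.getVert (i + 1), p.getVert i) = (p.getVert (j + 1), p.getVert j) → i = j := by
      intro i hi j hj hij
      rw [Finset.mem_range] at hi hj
      exact hinj i (by omega) j (by omega) (congrArg Prod.snd hij)
    have hdisj : Disjoint T1 T2 := by
      rw [Finset.disjoint_left]
      intro z hz1 hz2
      rw [hT1, Finset.mem_image] at hz1
      rw [hT2, Finset.mem_image] at hz2
      obtain ⟨i, hi, hzi⟩ := hz1
      obtain ⟨j, hj, hzj⟩ := hz2
      rw [Finset.mem_range] at hi hj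
      rw [← hzj] at hzi
      have h1 : i = j + 1 := hinj i (by omega) (j + 1) (by omega) (congrArg Prod.fst hzi)
      have h2 : i + 1 = j := hinj (i + 1) (by omega) j (by omega) (congrArg Prod.snd hzi)
      omega
    set F : V × V → ℝ := fun z =>
      (if G.Adj z.1 z.2 then (1 : ℝ) else 0) * (g z.1 - g z.2) ^ 2 with hF
    have hF0 : ∀ z ∈ (Finset.univ ×ˢ Finset.univ : Finset (V × V)), 0 ≤ F z := by
      intro z _
      rw [hF]
      simp only
      positivity
    have hsub : T1 ∪ T2 ⊆ (Finset.univ ×ˢ Finset.univ : Finset (V × V)) := by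
      intro z _
      simp
    have hT1sum : ∑ z ∈ T1, F z = ∑ i ∈ Finset.range d, (a i) ^ 2 := by
      rw [hT1, Finset.sum_image hinj1]
      refine Finset.sum_congr rfl ?_
      intro i hi
      rw [Finset.mem_range] at hi
      have hadj : G.Adj (p.getVert i) (p.getVert (i + 1)) :=
        p.adj_getVert_succ (by omega)
      rw [hF, ha]
      simp [hadj]
    have hT2sum : ∑ z ∈ T2, F z = ∑ i ∈ Finset.range d, (a i) ^ 2 := by
      rw [hT2, Finset.sum_image hinj2]
      refine Finset.sum_congr rfl ?_
      intro i hi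
      rw [Finset.mem_range] at hi
      have hadj : G.Adj (p.getVert (i + 1)) (p.getVert i) :=
        (p.adj_getVert_succ (by omega)).symm
      rw [hF, ha]
      simp only [if_pos hadj, one_mul]
      ring
    have hEg : E g = (1 / 2) * ∑ z ∈ (Finset.univ ×ˢ Finset.univ : Finset (V × V)), F z := by
      rw [hE g, ← Finset.sum_product']
    have hge : ∑ z ∈ (Finset.univ ×ˢ Finset.univ : Finset (V × V)), F z
        ≥ ∑ z ∈ T1 ∪ T2, F z :=
      Finset.sum_le_sum_of_subset_of_nonneg hsub (fun z hz _ => hF0 z hz)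
    rw [Finset.sum_union hdisj, hT1sum, hT2sum] at hge
    rw [hEg]
    calc 1 / (d : ℝ) ≤ ∑ i ∈ Finset.range d, (a i) ^ 2 := hS
    _ = (1 / 2) * (∑ i ∈ Finset.range d, (a i) ^ 2 + ∑ i ∈ Finset.range d, (a i) ^ 2) := by ring
    _ ≤ (1 / 2) * ∑ z ∈ (Finset.univ ×ˢ Finset.univ : Finset (V × V)), F z := by linarith [hge]
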